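/- Let λ, μ > 0 with λ < μ and u₁ = 1/√((1+λ²)(1+μ²)). If χ = −λu₁ and ψ = μu₁ satisfy λ(1−μ²)/((1+λ²)(1+μ²)) − (2/μ)χψ + (1/λ)ψ² = 0 and μ(1−λ²)/((1+λ²)(1+μ²)) − (2/λ)χψ + (1/μ)χ² = 0, then 3λ² + μ² = λ²μ² and 3μ² + λ² = λ²μ², whence λ = μ, a contradiction. -/

import Mathlib

/-- With 0 < λ < μ, u₁ = 1/√((1+λ²)(1+μ²)), the choice
χ = −λu₁, ψ = μu₁ in the two Codazzi equations forces 3λ² + μ² = λ²μ² and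
3μ² + λ² = λ²μ², whence λ = μ, a contradiction. -/
theorem stmt_9 (lam mu u₁ chi psi : ℝ) (hlam : 0 < lam) (hlm : lam < mu)
    (hu₁ : u₁ = 1 / Real.sqrt ((1 + lam ^ 2) * (1 + mu ^ 2)))
    (hchi : chi = -(lam * u₁)) (hpsi : psi = mu * u₁)
    (h1 : lam * (1 - mu ^ 2) / ((1 + lam ^ 2) * (1 + mu ^ 2)) - (2 / mu) * (chi * psi) +
        (1 / lam) * psi ^ 2 = 0)
    (h2 : mu * (1 - lam ^ 2) / ((1 + lam ^ 2) * (1 + mu ^ 2)) - (2 / lam) * (chi * psi) +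
        (1 / mu) * chi ^ 2 = 0) :
    (3 * lam ^ 2 + mu ^ 2 = lam ^ 2 * mu ^ 2 ∧ 3 * mu ^ 2 + lam ^ 2 = lam ^ 2 * mu ^ 2) ∧
      False := by
  have hmu : 0 < mu := hlam.trans hlm
  have hD : (0:ℝ) < (1 + lam ^ 2) * (1 + mu ^ 2) := by positivity
  have hu2 : u₁ ^ 2 = 1 / ((1 + lam ^ 2) * (1 + mu ^ 2)) := by
    rw [hu₁, div_pow, one_pow, Real.sq_sqrt hD.le]
  subst hchi hpsi
  have key : ((1 + lam ^ 2) * (1 + mu ^ 2)) * u₁ ^ 2 = 1 := by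
    rw [hu2]; field_simp
  have e1 : 3 * lam ^ 2 + mu ^ 2 = lam ^ 2 * mu ^ 2 := by
    field_simp at h1
    have e1' : mu * (3 * lam ^ 2 + mu ^ 2 - lam ^ 2 * mu ^ 2) = 0 := by
      linear_combination mu * h1 - (2 * lam ^ 2 * mu + mu ^ 3) * key
    have := (mul_eq_zero.1 e1').resolve_left hmu.ne'
    linarith
  have e2 : 3 * mu ^ 2 + lam ^ 2 = lam ^ 2 * mu ^ 2 := by
    field_simp at h2
    have e2' : lam * (3 * mu ^ 2 + lam ^ 2 - lam ^ 2 * mu ^ 2) = 0 := by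
      linear_combination lam * h2 - (2 * mu ^ 2 * lam + lam ^ 3) * key
    have := (mul_eq_zero.1 e2').resolve_left hlam.ne'
    linarith
  exact ⟨⟨e1, e2⟩, by nlinarith [e1, e2, mul_pos hlam hmu]⟩
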